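/- arXiv:1203.3735 — 2 statements merged into one kernel-verified Lean document; each statement's English description precedes it below -/
import Mathlib

section
/- Let 𝔏 be a finite collection of lines in ℝ³, let k ≥ 1, and let x be a joint for 𝔏 of multiplicity N(x) = N such that x lies on at most 2k lines of 𝔏. Let 𝔏' ⊆ 𝔏 be a subcollection such that either x is not a joint for 𝔏', or x is a joint for 𝔏' of multiplicity at most N/2. Then at least N/(1000·k²) lines of 𝔏 ∖ 𝔏' pass through x. -/
/-- A line in `ℝⁿ`: a set of the form `{a + t • v : t ∈ ℝ}` with `v ≠ 0`. -/
def IsLine (n : ℕ) (ℓ : Set (Fin n → ℝ)) : Prop :=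
  ∃ a v : Fin n → ℝ, v ≠ 0 ∧ ℓ = {p | ∃ t : ℝ, p = a + t • v}

/-- `v` is a direction vector of the line `ℓ`. -/
def HasDir (n : ℕ) (ℓ : Set (Fin n → ℝ)) (v : Fin n → ℝ) : Prop :=
  v ≠ 0 ∧ ∃ a : Fin n → ℝ, ℓ = {p | ∃ t : ℝ, p = a + t • v}

/-- `x` is a joint for the collection `𝔏` of lines. -/
def IsJoint (𝔏 : Finset (Set (Fin 3 → ℝ))) (x : Fin 3 → ℝ) : Prop :=
  ∃ ℓ₁ ∈ 𝔏, ∃ ℓ₂ ∈ 𝔏, ∃ ℓ₃ ∈ 𝔏, x ∈ ℓ₁ ∧ x ∈ ℓ₂ ∧ x ∈ ℓ₃ ∧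
    ∃ v₁ v₂ v₃ : Fin 3 → ℝ, HasDir 3 ℓ₁ v₁ ∧ HasDir 3 ℓ₂ v₂ ∧ HasDir 3 ℓ₃ v₃ ∧
      LinearIndependent ℝ ![v₁, v₂, v₃]

open scoped Classical in
/-- The multiplicity `N(x)` of a joint `x`. -/
noncomputable def jointMult (𝔏 : Finset (Set (Fin 3 → ℝ))) (x : Fin 3 → ℝ) : ℕ :=
  ((𝔏.powersetCard 3).filter fun T =>
    ∃ ℓ₁ ℓ₂ ℓ₃ : Set (Fin 3 → ℝ), T = {ℓ₁, ℓ₂, ℓ₃} ∧ x ∈ ℓ₁ ∧ x ∈ ℓ₂ ∧ x ∈ ℓ₃ ∧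
      ∃ v₁ v₂ v₃ : Fin 3 → ℝ, HasDir 3 ℓ₁ v₁ ∧ HasDir 3 ℓ₂ v₂ ∧ HasDir 3 ℓ₃ v₃ ∧
        LinearIndependent ℝ ![v₁, v₂, v₃]).card

open scoped Classical in
/-- The number of lines of `𝔏` passing through `x`. -/
noncomputable def linesThrough (𝔏 : Finset (Set (Fin 3 → ℝ))) (x : Fin 3 → ℝ) : ℕ :=
  (𝔏.filter fun ℓ => x ∈ ℓ).card

open scoped Classical in
/-- If `x` is a joint of multiplicity `N` for `𝔏`, lying on at most `2k` lines of `𝔏`,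
and `𝔏' ⊆ 𝔏` is such that `x` is not a joint for `𝔏'`, or is a joint for `𝔏'` of
multiplicity at most `N/2`, then at least `N/(1000 k²)` lines of `𝔏 \ 𝔏'` pass
through `x`. -/
theorem joint_lines_outside_subcollection
    (𝔏 𝔏' : Finset (Set (Fin 3 → ℝ))) (h𝔏 : ∀ ℓ ∈ 𝔏, IsLine 3 ℓ)
    (hsub : 𝔏' ⊆ 𝔏) (k : ℕ) (hk : 1 ≤ k) (x : Fin 3 → ℝ) (N : ℕ)
    (hjoint : IsJoint 𝔏 x) (hN : jointMult 𝔏 x = N)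
    (hlines : linesThrough 𝔏 x ≤ 2 * k)
    (h' : ¬ IsJoint 𝔏' x ∨ (jointMult 𝔏' x : ℝ) ≤ (N : ℝ) / 2) :
    (N : ℝ) / (1000 * (k : ℝ) ^ 2) ≤ (linesThrough (𝔏 \ 𝔏') x : ℝ) := by
  classical
  -- the predicate
  set P : Finset (Set (Fin 3 → ℝ)) → Prop := fun T =>
    ∃ ℓ₁ ℓ₂ ℓ₃ : Set (Fin 3 → ℝ), T = {ℓ₁, ℓ₂, ℓ₃} ∧ x ∈ ℓ₁ ∧ x ∈ ℓ₂ ∧ x ∈ ℓ₃ ∧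
      ∃ v₁ v₂ v₃ : Fin 3 → ℝ, HasDir 3 ℓ₁ v₁ ∧ HasDir 3 ℓ₂ v₂ ∧ HasDir 3 ℓ₃ v₃ ∧
        LinearIndependent ℝ ![v₁, v₂, v₃] with hPdef
  set A : Finset (Finset (Set (Fin 3 → ℝ))) := (𝔏.powersetCard 3).filter P with hA
  set S : Finset (Set (Fin 3 → ℝ)) := 𝔏.filter fun ℓ => x ∈ ℓ with hS
  set D : Finset (Set (Fin 3 → ℝ)) := (𝔏 \ 𝔏').filter fun ℓ => x ∈ ℓ with hD
  have hAcard : A.card = N := hN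
  have hmem : ∀ T ∈ A, ∀ ℓ ∈ T, x ∈ ℓ := by
    intro T hT ℓ hℓ
    obtain ⟨-, ℓ₁, ℓ₂, ℓ₃, rfl, h1, h2, h3, -⟩ := Finset.mem_filter.mp hT
    simp only [Finset.mem_insert, Finset.mem_singleton] at hℓ
    rcases hℓ with rfl | rfl | rfl <;> assumption
  have hTsub : ∀ T ∈ A, T ⊆ 𝔏 := fun T hT =>
    (Finset.mem_powersetCard.mp (Finset.mem_filter.mp hT).1).1
  have hTcard : ∀ T ∈ A, T.card = 3 := fun T hT =>
    (Finset.mem_powersetCard.mp (Finset.mem_filter.mp hT).1).2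
  have hTS : ∀ T ∈ A, T ⊆ S := by
    intro T hT ℓ hℓ
    exact Finset.mem_filter.mpr ⟨hTsub T hT hℓ, hmem T hT ℓ hℓ⟩
  have hScard : S.card ≤ 2 * k := hlines
  -- bound on triples containing a fixed line
  have hcount : ∀ ℓ ∈ D, (A.filter fun T => ℓ ∈ T).card ≤ (2 * k).choose 2 := by
    intro ℓ _
    have h1 : (A.filter fun T => ℓ ∈ T).card ≤ ((S.erase ℓ).powersetCard 2).card := by
      apply Finset.card_le_card_of_injOn (fun T => T.erase ℓ)
      · intro T hT
        obtain ⟨hTA, hℓT⟩ := Finset.mem_filter.mp hT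
        refine Finset.mem_powersetCard.mpr ⟨Finset.erase_subset_erase ℓ (hTS T hTA), ?_⟩
        rw [Finset.card_erase_of_mem hℓT, hTcard T hTA]
      · intro T hT T' hT' h
        have hT1 := (Finset.mem_filter.mp (Finset.mem_coe.mp hT)).2
        have hT2 := (Finset.mem_filter.mp (Finset.mem_coe.mp hT')).2
        have := congrArg (insert ℓ) h
        rwa [Finset.insert_erase hT1, Finset.insert_erase hT2] at this
    rw [Finset.card_powersetCard] at h1
    refine h1.trans (Nat.choose_le_choose 2 ?_)
    exact (Finset.card_erase_le).trans hScard
  -- split A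
  have hsplit : (A.filter fun T => T ⊆ 𝔏').card + (A.filter fun T => ¬ T ⊆ 𝔏').card = A.card :=
    Finset.card_filter_add_card_filter_not _
  -- triples inside 𝔏' are counted in jointMult 𝔏' x
  have hB : (A.filter fun T => T ⊆ 𝔏').card ≤ jointMult 𝔏' x := by
    apply Finset.card_le_card
    intro T hT
    obtain ⟨hTA, hTsub'⟩ := Finset.mem_filter.mp hT
    exact Finset.mem_filter.mpr
      ⟨Finset.mem_powersetCard.mpr ⟨hTsub', hTcard T hTA⟩, (Finset.mem_filter.mp hTA).2⟩
  -- triples not inside 𝔏' contain a line of D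
  have hbad : (A.filter fun T => ¬ T ⊆ 𝔏').card ≤ D.card * (2 * k).choose 2 := by
    have hsub2 : (A.filter fun T => ¬ T ⊆ 𝔏') ⊆ D.biUnion fun ℓ => A.filter fun T => ℓ ∈ T := by
      intro T hT
      obtain ⟨hTA, hns⟩ := Finset.mem_filter.mp hT
      obtain ⟨ℓ, hℓT, hℓn⟩ := Finset.not_subset.mp hns
      refine Finset.mem_biUnion.mpr ⟨ℓ, ?_, Finset.mem_filter.mpr ⟨hTA, hℓT⟩⟩
      exact Finset.mem_filter.mpr ⟨Finset.mem_sdiff.mpr ⟨hTsub T hTA hℓT, hℓn⟩, hmem T hTA ℓ hℓT⟩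
    calc (A.filter fun T => ¬ T ⊆ 𝔏').card
        ≤ (D.biUnion fun ℓ => A.filter fun T => ℓ ∈ T).card := Finset.card_le_card hsub2
      _ ≤ ∑ ℓ ∈ D, (A.filter fun T => ℓ ∈ T).card := Finset.card_biUnion_le
      _ ≤ D.card * (2 * k).choose 2 := by
          simpa using Finset.sum_le_card_nsmul D _ _ hcount
  set c : ℕ := D.card * (2 * k).choose 2 with hc
  have hNineq : N ≤ jointMult 𝔏' x + c := by omega
  -- choose bound
  have hchoose : (2 * k).choose 2 ≤ 2 * k ^ 2 := by
    rw [Nat.choose_two_right]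
    have h1 : 2 * k * (2 * k - 1) = 2 * (k * (2 * k - 1)) := by ring
    rw [h1, Nat.mul_div_cancel_left _ (by norm_num : 0 < 2)]
    calc k * (2 * k - 1) ≤ k * (2 * k) := Nat.mul_le_mul_left k (by omega)
      _ = 2 * k ^ 2 := by ring
  have hcbound : c ≤ D.card * (2 * k ^ 2) := Nat.mul_le_mul_left _ hchoose
  -- multiplicity in 𝔏' is at most N/2
  have hz : ¬ IsJoint 𝔏' x → jointMult 𝔏' x = 0 := by
    intro h
    unfold jointMult
    rw [Finset.card_eq_zero, Finset.filter_eq_empty_iff]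
    rintro T hT ⟨ℓ₁, ℓ₂, ℓ₃, rfl, h1, h2, h3, v₁, v₂, v₃, hv₁, hv₂, hv₃, hli⟩
    have hsub' := (Finset.mem_powersetCard.mp hT).1
    exact h ⟨ℓ₁, hsub' (by simp), ℓ₂, hsub' (by simp), ℓ₃, hsub' (by simp),
      h1, h2, h3, v₁, v₂, v₃, hv₁, hv₂, hv₃, hli⟩
  have hN' : (jointMult 𝔏' x : ℝ) ≤ (N : ℝ) / 2 := by
    rcases h' with h | h
    · rw [hz h]; simp only [Nat.cast_zero]; positivity
    · exact h
  -- conclude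
  have hmD : linesThrough (𝔏 \ 𝔏') x = D.card := rfl
  rw [hmD]
  have hk' : (1 : ℝ) ≤ (k : ℝ) := by exact_mod_cast hk
  have hkpos : (0 : ℝ) < 1000 * (k : ℝ) ^ 2 := by positivity
  rw [div_le_iff₀ hkpos]
  have h1 : (N : ℝ) ≤ (jointMult 𝔏' x : ℝ) + (c : ℝ) := by exact_mod_cast hNineq
  have h2 : (c : ℝ) ≤ (D.card : ℝ) * (2 * (k : ℝ) ^ 2) := by exact_mod_cast hcbound
  have h3 : (0 : ℝ) ≤ (D.card : ℝ) := Nat.cast_nonneg _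
  nlinarith [mul_nonneg h3 (sq_nonneg (k : ℝ))]
end

section
/- Let 𝔏 be a finite collection of lines in ℝ³, let k ≥ 1, and let x be a joint for 𝔏 of multiplicity N such that x lies on at most 2k lines of 𝔏. Then for every plane H (2-dimensional affine subspace of ℝ³) containing x, at least N/(1000·k²) lines of 𝔏 pass through x and are not contained in H. -/
/-- A plane in `ℝ³`: a 2-dimensional affine subspace
`{a + s • u + t • w : s, t ∈ ℝ}` with `u, w` linearly independent. -/
def IsPlane (H : Set (Fin 3 → ℝ)) : Prop :=
  ∃ a u w : Fin 3 → ℝ, LinearIndependent ℝ ![u, w] ∧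
    H = {p | ∃ s t : ℝ, p = a + s • u + t • w}

open scoped Classical

lemma mem_span_pair_of_plane (a u w x v : Fin 3 → ℝ)
    (hx : ∃ s t : ℝ, x = a + s • u + t • w)
    (hxv : ∃ s t : ℝ, x + v = a + s • u + t • w) :
    v ∈ Submodule.span ℝ ({u, w} : Set (Fin 3 → ℝ)) := by
  obtain ⟨s₀, t₀, h₀⟩ := hx
  obtain ⟨s₁, t₁, h₁⟩ := hxv
  have hv : v = (s₁ - s₀) • u + (t₁ - t₀) • w := by
    have h2 : v = (a + s₁ • u + t₁ • w) - (a + s₀ • u + t₀ • w) := by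
      rw [← h₁, ← h₀]; abel
    rw [h2]; module
  rw [hv]
  exact Submodule.add_mem _ (Submodule.smul_mem _ _ (Submodule.subset_span (by simp)))
    (Submodule.smul_mem _ _ (Submodule.subset_span (by simp)))

lemma dir_mem_span (ℓ : Set (Fin 3 → ℝ)) (v : Fin 3 → ℝ) (hd : HasDir 3 ℓ v)
    (x : Fin 3 → ℝ) (hx : x ∈ ℓ) (a u w : Fin 3 → ℝ)
    (hsub : ℓ ⊆ {p | ∃ s t : ℝ, p = a + s • u + t • w}) :
    v ∈ Submodule.span ℝ ({u, w} : Set (Fin 3 → ℝ)) := by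
  obtain ⟨hv0, a', ha'⟩ := hd
  rw [ha'] at hx hsub
  obtain ⟨t₀, ht₀⟩ := hx
  have hxv : x + v ∈ {p : Fin 3 → ℝ | ∃ t : ℝ, p = a' + t • v} := by
    exact ⟨t₀ + 1, by rw [ht₀]; module⟩
  exact mem_span_pair_of_plane a u w x v (hsub ⟨t₀, ht₀⟩) (hsub hxv)

lemma not_all_three_in_plane (ℓ₁ ℓ₂ ℓ₃ : Set (Fin 3 → ℝ)) (x : Fin 3 → ℝ)
    (hx1 : x ∈ ℓ₁) (hx2 : x ∈ ℓ₂) (hx3 : x ∈ ℓ₃)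
    (v₁ v₂ v₃ : Fin 3 → ℝ) (hd1 : HasDir 3 ℓ₁ v₁) (hd2 : HasDir 3 ℓ₂ v₂)
    (hd3 : HasDir 3 ℓ₃ v₃) (li : LinearIndependent ℝ ![v₁, v₂, v₃])
    (H : Set (Fin 3 → ℝ)) (hH : IsPlane H) :
    ¬ (ℓ₁ ⊆ H ∧ ℓ₂ ⊆ H ∧ ℓ₃ ⊆ H) := by
  rintro ⟨h1, h2, h3⟩
  obtain ⟨a, u, w, hli, rfl⟩ := hH
  set W := Submodule.span ℝ ({u, w} : Set (Fin 3 → ℝ)) with hW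
  have m1 := dir_mem_span ℓ₁ v₁ hd1 x hx1 a u w h1
  have m2 := dir_mem_span ℓ₂ v₂ hd2 x hx2 a u w h2
  have m3 := dir_mem_span ℓ₃ v₃ hd3 x hx3 a u w h3
  have hmem : ∀ i, (![v₁, v₂, v₃]) i ∈ W := by
    intro i; fin_cases i <;> assumption
  have li' : LinearIndependent ℝ (fun i => (⟨![v₁, v₂, v₃] i, hmem i⟩ : W)) := by
    apply LinearIndependent.of_comp W.subtype
    convert li
    rfl
  have h3le : Fintype.card (Fin 3) ≤ Module.finrank ℝ W :=
    li'.fintype_card_le_finrank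
  have h2ge : Module.finrank ℝ W ≤ 2 := by
    have : ({u, w} : Set (Fin 3 → ℝ)).toFinset.card ≤ 2 := by
      classical
      simp only [Set.toFinset_insert, Set.toFinset_singleton]
      exact (Finset.card_insert_le _ _).trans (by simp)
    exact (finrank_span_le_card _).trans this
  simp [Fintype.card_fin] at h3le
  omega

open scoped Classical in
/-- If `x` is a joint of multiplicity `N` for `𝔏`, lying on at most `2k` lines of `𝔏`,
then for every plane `H` containing `x`, at least `N/(1000 k²)` lines of `𝔏` pass
through `x` and are not contained in `H`. -/
theorem joint_lines_outside_plane
    (𝔏 : Finset (Set (Fin 3 → ℝ))) (h𝔏 : ∀ ℓ ∈ 𝔏, IsLine 3 ℓ)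
    (k : ℕ) (hk : 1 ≤ k) (x : Fin 3 → ℝ) (N : ℕ)
    (hjoint : IsJoint 𝔏 x) (hN : jointMult 𝔏 x = N)
    (hlines : linesThrough 𝔏 x ≤ 2 * k)
    (H : Set (Fin 3 → ℝ)) (hH : IsPlane H) (hxH : x ∈ H) :
    (N : ℝ) / (1000 * (k : ℝ) ^ 2) ≤
      ((𝔏.filter fun ℓ => x ∈ ℓ ∧ ¬ ℓ ⊆ H).card : ℝ) := by
  subst hN
  set P := 𝔏.filter fun ℓ => x ∈ ℓ with hP
  set B := 𝔏.filter fun ℓ => x ∈ ℓ ∧ ¬ ℓ ⊆ H with hB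
  set S := ((𝔏.powersetCard 3).filter fun T =>
    ∃ ℓ₁ ℓ₂ ℓ₃ : Set (Fin 3 → ℝ), T = {ℓ₁, ℓ₂, ℓ₃} ∧ x ∈ ℓ₁ ∧ x ∈ ℓ₂ ∧ x ∈ ℓ₃ ∧
      ∃ v₁ v₂ v₃ : Fin 3 → ℝ, HasDir 3 ℓ₁ v₁ ∧ HasDir 3 ℓ₂ v₂ ∧ HasDir 3 ℓ₃ v₃ ∧
        LinearIndependent ℝ ![v₁, v₂, v₃]) with hS
  have hmult : jointMult 𝔏 x = S.card := rfl
  -- every triple in S lies in P and contains a line of B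
  have hkey : ∀ T ∈ S, T ⊆ P ∧ ∃ ℓ ∈ T, ℓ ∈ B := by
    intro T hT
    rw [hS, Finset.mem_filter, Finset.mem_powersetCard] at hT
    obtain ⟨⟨hTsub, _⟩, ℓ₁, ℓ₂, ℓ₃, hTeq, hx1, hx2, hx3, v₁, v₂, v₃, hd1, hd2, hd3, li⟩ := hT
    have hmemx : ∀ ℓ ∈ T, x ∈ ℓ := by
      intro ℓ hℓ
      rw [hTeq] at hℓ
      simp only [Finset.mem_insert, Finset.mem_singleton] at hℓ
      rcases hℓ with rfl | rfl | rfl <;> assumption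
    constructor
    · intro ℓ hℓ
      rw [hP, Finset.mem_filter]
      exact ⟨hTsub hℓ, hmemx ℓ hℓ⟩
    · have hnot := not_all_three_in_plane ℓ₁ ℓ₂ ℓ₃ x hx1 hx2 hx3 v₁ v₂ v₃ hd1 hd2 hd3 li H hH
      have hmemT : ∀ ℓ ∈ ({ℓ₁, ℓ₂, ℓ₃} : Finset (Set (Fin 3 → ℝ))), ℓ ∈ T := by
        intro ℓ hℓ; rw [hTeq]; exact hℓ
      by_contra hcon
      push_neg at hcon
      apply hnot
      refine ⟨?_, ?_, ?_⟩
      · by_contra h1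
        exact (hcon ℓ₁ (hmemT _ (by simp))) (by rw [hB, Finset.mem_filter]; exact ⟨hTsub (hmemT _ (by simp)), hx1, h1⟩)
      · by_contra h1
        exact (hcon ℓ₂ (hmemT _ (by simp))) (by rw [hB, Finset.mem_filter]; exact ⟨hTsub (hmemT _ (by simp)), hx2, h1⟩)
      · by_contra h1
        exact (hcon ℓ₃ (hmemT _ (by simp))) (by rw [hB, Finset.mem_filter]; exact ⟨hTsub (hmemT _ (by simp)), hx3, h1⟩)
  -- S is covered by the biUnion over B
  have hcover : S ⊆ B.biUnion fun ℓ => S.filter fun T => ℓ ∈ T := by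
    intro T hT
    obtain ⟨_, ℓ, hℓT, hℓB⟩ := hkey T hT
    rw [Finset.mem_biUnion]
    exact ⟨ℓ, hℓB, Finset.mem_filter.mpr ⟨hT, hℓT⟩⟩
  -- bound each fiber
  have hfiber : ∀ ℓ, (S.filter fun T => ℓ ∈ T).card ≤ 2 * k * (2 * k) := by
    intro ℓ
    have hinj : (S.filter fun T => ℓ ∈ T).card ≤ (P.powersetCard 2).card := by
      apply Finset.card_le_card_of_injOn (fun T => T.erase ℓ)
      · intro T hT
        rw [Finset.mem_coe, Finset.mem_filter] at hT
        obtain ⟨hTS, hℓT⟩ := hT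
        have hcard : T.card = 3 := (Finset.mem_powersetCard.mp (Finset.mem_filter.mp hTS).1).2
        rw [Finset.mem_coe, Finset.mem_powersetCard]
        refine ⟨(Finset.erase_subset _ _).trans ((hkey T hTS).1), ?_⟩
        rw [Finset.card_erase_of_mem hℓT, hcard]
      · intro T₁ h₁ T₂ h₂ heq
        have e₁ := Finset.insert_erase (Finset.mem_filter.mp (Finset.mem_coe.mp h₁)).2
        have e₂ := Finset.insert_erase (Finset.mem_filter.mp (Finset.mem_coe.mp h₂)).2
        rw [← e₁, ← e₂]
        exact congrArg (insert ℓ) heq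
    have hpow : (P.powersetCard 2).card ≤ 2 * k * (2 * k) := by
      rw [Finset.card_powersetCard]
      calc P.card.choose 2 ≤ P.card * P.card := by
            rw [Nat.choose_two_right]
            exact (Nat.div_le_self _ _).trans (Nat.mul_le_mul_left _ (Nat.sub_le _ _))
        _ ≤ 2 * k * (2 * k) := Nat.mul_le_mul hlines hlines
    exact hinj.trans hpow
  -- combine
  have hcount : S.card ≤ B.card * (2 * k * (2 * k)) := by
    calc S.card ≤ (B.biUnion fun ℓ => S.filter fun T => ℓ ∈ T).card :=
          Finset.card_le_card hcover
      _ ≤ ∑ ℓ ∈ B, (S.filter fun T => ℓ ∈ T).card := Finset.card_biUnion_le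
      _ ≤ B.card * (2 * k * (2 * k)) := by
          simpa [smul_eq_mul] using
            Finset.sum_le_card_nsmul B _ (2 * k * (2 * k)) fun ℓ _ => hfiber ℓ
  -- final arithmetic
  rw [hmult]
  have hc : (S.card : ℝ) ≤ (B.card : ℝ) * (2 * k * (2 * k)) := by exact_mod_cast hcount
  have hkpos : (0:ℝ) < (k:ℝ) := by exact_mod_cast hk
  rw [div_le_iff₀ (by positivity)]
  nlinarith [Nat.cast_nonneg (α := ℝ) B.card, sq_nonneg ((k:ℝ))]
end
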